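/- For n ≥ 4, a cube Q ⊂ ℝⁿ of side length ℓ, and every λ > 0, the Dirichlet counting function satisfies N_Q^D(λ) ≥ (ω(n)ℓⁿ/(2π)ⁿ) λ^{n/2} − (ω(n) n^{3/2} π ℓ^{n−1}/(2π)ⁿ) λ^{(n−1)/2}, where ω(n) is the volume of the unit ball in ℝⁿ. -/

import Mathlib

open Real MeasureTheory
open scoped ENNReal

/-- The volume of the unit ball in `ℝⁿ`: `ω(n) = π^{n/2}/Γ(1 + n/2)`. -/
noncomputable def ballVol (n : ℕ) : ℝ := π ^ ((n : ℝ) / 2) / Real.Gamma ((n : ℝ) / 2 + 1)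

lemma aux_ballVol_pos (n : ℕ) : 0 < ballVol n := by
  unfold ballVol
  have h1 : 0 < π ^ ((n : ℝ) / 2) := Real.rpow_pos_of_pos pi_pos _
  have h2 : 0 < Real.Gamma ((n : ℝ) / 2 + 1) := Real.Gamma_pos_of_pos (by positivity)
  positivity

/-- Volume of the Euclidean ball in pi-coordinates. -/
lemma aux_vol_ball (n : ℕ) (hn : 0 < n) (r : ℝ) (hr : 0 < r) :
    volume {x : Fin n → ℝ | ∑ i, (x i) ^ 2 < r ^ 2} =
      ENNReal.ofReal (ballVol n * r ^ n) := by
  have : Nonempty (Fin n) := Fin.pos_iff_nonempty.mp hn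
  have h := MeasureTheory.volume_sum_rpow_lt (ι := Fin n) (p := 2) one_le_two r
  have hset : {x : Fin n → ℝ | (∑ i, |x i| ^ (2:ℝ)) ^ (1/(2:ℝ)) < r}
      = {x : Fin n → ℝ | ∑ i, (x i) ^ 2 < r ^ 2} := by
    ext x
    have he : ∀ i : Fin n, |x i| ^ (2:ℝ) = (x i) ^ 2 := fun i => by
      rw [show (2:ℝ) = ((2:ℕ):ℝ) by norm_num, Real.rpow_natCast, sq_abs]
    simp only [Set.mem_setOf_eq, he]
    rw [← Real.sqrt_eq_rpow, Real.sqrt_lt' hr]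
  rw [hset] at h
  rw [h]
  have hg : 2 * Real.Gamma (1/2 + 1) = Real.sqrt π := by
    rw [Real.Gamma_add_one (by norm_num), Real.Gamma_one_half_eq]
    ring
  have hg2 : (2 * Real.Gamma (1/2 + 1)) ^ (Fintype.card (Fin n)) = π ^ ((n:ℝ)/2) := by
    rw [hg, Fintype.card_fin, Real.sqrt_eq_rpow, ← Real.rpow_natCast (π ^ (1/(2:ℝ))) n,
      ← Real.rpow_mul pi_pos.le]
    ring_nf
  rw [hg2, Fintype.card_fin, ← ENNReal.ofReal_pow hr.le, ← ENNReal.ofReal_mul (by positivity)]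
  unfold ballVol
  ring_nf

/-- Sign-flip symmetry: the ball is covered by `2^n` copies of the positive orthant part. -/
lemma aux_sym (n : ℕ) (r : ℝ) :
    volume {x : Fin n → ℝ | ∑ i, (x i) ^ 2 < r ^ 2}
      ≤ 2 ^ n * volume {x : Fin n → ℝ | (∀ i, 0 < x i) ∧ ∑ i, (x i) ^ 2 < r ^ 2} := by
  classical
  set Bp := {x : Fin n → ℝ | (∀ i, 0 < x i) ∧ ∑ i, (x i) ^ 2 < r ^ 2} with hBp
  have hBp_meas : MeasurableSet Bp := by
    have : Bp = (⋂ i, {x : Fin n → ℝ | 0 < x i}) ∩ {x : Fin n → ℝ | ∑ i, (x i) ^ 2 < r ^ 2} := by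
      ext x; simp [hBp, Set.mem_iInter]
    rw [this]
    refine MeasurableSet.inter (MeasurableSet.iInter fun i => ?_) ?_
    · exact measurableSet_lt measurable_const (measurable_pi_apply i)
    · exact measurableSet_lt (by fun_prop) measurable_const
  set flip : (Fin n → Bool) → (Fin n → ℝ) → (Fin n → ℝ) :=
    fun ε x i => if ε i then x i else -x i with hflip
  have hmp : ∀ ε : Fin n → Bool, MeasurePreserving (flip ε) volume volume := fun ε =>
    volume_preserving_pi (f := fun i (t : ℝ) => if ε i then t else -t) fun i => by
      by_cases h : ε i = true <;>
        simp only [h, if_true, Bool.false_eq_true, if_false, eq_self_iff_true]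
      · exact MeasurePreserving.id _
      · exact Measure.measurePreserving_neg (volume : Measure ℝ)
  have hnull : ∀ i : Fin n, volume {x : Fin n → ℝ | x i = 0} = 0 := by
    intro i
    have : {x : Fin n → ℝ | x i = 0}
        = Set.pi Set.univ (fun j => if j = i then ({0} : Set ℝ) else Set.univ) := by
      ext x
      simp only [Set.mem_setOf_eq, Set.mem_pi, Set.mem_univ, forall_true_left]
      constructor
      · intro h j; split <;> simp_all
      · intro h; simpa using h i
    rw [this, volume_pi_pi]
    apply Finset.prod_eq_zero (Finset.mem_univ i)
    simp
  have hcover : {x : Fin n → ℝ | ∑ i, (x i) ^ 2 < r ^ 2}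
      ⊆ (⋃ i, {x : Fin n → ℝ | x i = 0}) ∪ ⋃ ε : Fin n → Bool, (flip ε) ⁻¹' Bp := by
    intro x hx
    by_cases h0 : ∃ i, x i = 0
    · exact Or.inl (Set.mem_iUnion.mpr ⟨h0.choose, h0.choose_spec⟩)
    · push_neg at h0
      refine Or.inr (Set.mem_iUnion.mpr ⟨fun i => decide (0 < x i), ?_⟩)
      constructor
      · intro i
        by_cases h : 0 < x i
        · simpa [hflip, h] using h
        · have hlt : x i < 0 := lt_of_le_of_ne (not_lt.mp h) (h0 i)
          simp only [hflip, decide_eq_true_eq]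
          rw [if_neg h]
          linarith
      · have : ∀ i, (flip (fun i => decide (0 < x i)) x i) ^ 2 = (x i) ^ 2 := by
          intro i
          simp only [hflip]
          split <;> ring
        simpa [this] using hx
  calc volume {x : Fin n → ℝ | ∑ i, (x i) ^ 2 < r ^ 2}
      ≤ volume ((⋃ i, {x : Fin n → ℝ | x i = 0}) ∪ ⋃ ε : Fin n → Bool, (flip ε) ⁻¹' Bp) :=
        measure_mono hcover
    _ ≤ volume (⋃ i, {x : Fin n → ℝ | x i = 0})
          + volume (⋃ ε : Fin n → Bool, (flip ε) ⁻¹' Bp) := measure_union_le _ _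
    _ = volume (⋃ ε : Fin n → Bool, (flip ε) ⁻¹' Bp) := by
        rw [measure_iUnion_null hnull, zero_add]
    _ ≤ ∑' ε : Fin n → Bool, volume ((flip ε) ⁻¹' Bp) := measure_iUnion_le _
    _ = ∑ ε : Fin n → Bool, volume ((flip ε) ⁻¹' Bp) := tsum_fintype _
    _ = ∑ ε : Fin n → Bool, volume Bp := by
        refine Finset.sum_congr rfl fun ε _ => ?_
        exact (hmp ε).measure_preimage hBp_meas.nullMeasurableSet
    _ = 2 ^ n * volume Bp := by
        simp only [Finset.sum_const, Finset.card_univ, Fintype.card_fun, Fintype.card_bool,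
          Fintype.card_fin, nsmul_eq_mul, Nat.cast_pow, Nat.cast_ofNat]

/-- Ceiling map bound. -/
lemma aux_ceil (n : ℕ) (hn : 0 < n) (x : Fin n → ℝ) (r : ℝ) (hx : ∀ i, 0 < x i)
    (hs : ∑ i, (x i) ^ 2 < r ^ 2) (hr : 0 < r) :
    ∑ i, ((Nat.ceil (x i) : ℝ)) ^ 2 < (r + Real.sqrt n) ^ 2 := by
  set a : EuclideanSpace ℝ (Fin n) := WithLp.toLp 2 (fun i => (Nat.ceil (x i) : ℝ)) with ha
  set u : EuclideanSpace ℝ (Fin n) := WithLp.toLp 2 (fun i => x i) with hu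
  have hnorm_u : ‖u‖ < r := by
    rw [EuclideanSpace.norm_eq]
    apply Real.sqrt_lt' hr |>.mpr
    simpa [hu] using hs
  have hnorm_d : ‖a - u‖ ≤ Real.sqrt n := by
    rw [EuclideanSpace.norm_eq]
    apply Real.sqrt_le_sqrt
    have : ∀ i, ‖(a - u) i‖ ^ 2 ≤ 1 := by
      intro i
      have h1 : (a - u) i = (Nat.ceil (x i) : ℝ) - x i := rfl
      have h2 : (0:ℝ) ≤ (Nat.ceil (x i) : ℝ) - x i := by
        have := Nat.le_ceil (x i); linarith
      have h3 : (Nat.ceil (x i) : ℝ) - x i < 1 := by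
        have := Nat.ceil_lt_add_one (le_of_lt (hx i)); linarith
      rw [h1, Real.norm_eq_abs, sq_abs]
      nlinarith
    calc ∑ i, ‖(a - u) i‖ ^ 2 ≤ ∑ _i : Fin n, (1:ℝ) := Finset.sum_le_sum fun i _ => this i
      _ = n := by simp
  have htri : ‖a‖ < r + Real.sqrt n := by
    calc ‖a‖ = ‖(a - u) + u‖ := by rw [sub_add_cancel]
      _ ≤ ‖a - u‖ + ‖u‖ := norm_add_le _ _
      _ < Real.sqrt n + r := add_lt_add_of_le_of_lt hnorm_d hnorm_u
      _ = r + Real.sqrt n := by ring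
  have := Real.sqrt_lt' (by positivity : (0:ℝ) < r + Real.sqrt n) |>.mp
    (by rw [EuclideanSpace.norm_eq] at htri; simpa [Real.norm_eq_abs, sq_abs] using htri)
  simpa [ha] using this

/-- Covering by unit cubes. -/
lemma aux_cover (n : ℕ) (hn : 0 < n) (r R : ℝ) (hr : 0 < r) (hrR : r + Real.sqrt n ≤ R)
    (F : Finset (Fin n → ℕ))
    (hF : ∀ a : Fin n → ℕ, ((∀ i, 0 < a i) ∧ (∑ i, ((a i:ℝ))^2) < R^2) → a ∈ F) :
    volume {x : Fin n → ℝ | (∀ i, 0 < x i) ∧ ∑ i, (x i)^2 < r^2} ≤ (F.card : ℝ≥0∞) := by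
  classical
  set C : (Fin n → ℕ) → Set (Fin n → ℝ) :=
    fun a => Set.pi Set.univ fun i => Set.Ioc ((a i:ℝ) - 1) (a i) with hC
  have hsub : {x : Fin n → ℝ | (∀ i, 0 < x i) ∧ ∑ i, (x i)^2 < r^2} ⊆ ⋃ a ∈ F, C a := by
    rintro x ⟨hp, hs⟩
    have hmem : (fun i => Nat.ceil (x i)) ∈ F := by
      apply hF
      refine ⟨fun i => Nat.ceil_pos.mpr (hp i), ?_⟩
      calc ∑ i, ((Nat.ceil (x i) : ℝ)) ^ 2 < (r + Real.sqrt n) ^ 2 :=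
            aux_ceil n hn x r hp hs hr
        _ ≤ R ^ 2 := by
            apply pow_le_pow_left₀ (by positivity) hrR
    refine Set.mem_biUnion hmem ?_
    intro i _
    refine ⟨?_, Nat.le_ceil (x i)⟩
    have := Nat.ceil_lt_add_one (le_of_lt (hp i))
    linarith
  calc volume {x : Fin n → ℝ | (∀ i, 0 < x i) ∧ ∑ i, (x i)^2 < r^2}
      ≤ ∑ a ∈ F, volume (C a) := (measure_mono hsub).trans (measure_biUnion_finset_le F C)
    _ = (F.card : ℝ≥0∞) := by
        have : ∀ a : Fin n → ℕ, volume (C a) = 1 := by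
          intro a
          rw [hC]
          simp only
          rw [volume_pi_pi]
          simp [Real.volume_Ioc]
        simp [this]

/-- Bernoulli-type bound. -/
lemma aux_bernoulli (n : ℕ) (b s : ℝ) (hs : 0 ≤ s) (hsb : s ≤ b) :
    b ^ n - n * s * b ^ (n-1) ≤ (b - s) ^ n := by
  have hb : 0 ≤ b := hs.trans hsb
  have hgeom := geom_sum₂_mul b (b - s) n
  have hterm : ∀ i ∈ Finset.range n, b ^ i * (b - s) ^ (n - 1 - i) ≤ b ^ (n-1) := by
    intro i hi
    have hi' : i ≤ n - 1 := by
      have := Finset.mem_range.mp hi; omega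
    calc b ^ i * (b - s) ^ (n - 1 - i) ≤ b ^ i * b ^ (n - 1 - i) := by
          apply mul_le_mul_of_nonneg_left (pow_le_pow_left₀ (by linarith) (by linarith) _)
            (pow_nonneg hb i)
      _ = b ^ (n - 1) := by rw [← pow_add]; congr 1; omega
  have hsum : (∑ i ∈ Finset.range n, b ^ i * (b - s) ^ (n - 1 - i)) ≤ n * b ^ (n-1) := by
    calc (∑ i ∈ Finset.range n, b ^ i * (b - s) ^ (n - 1 - i))
        ≤ ∑ _i ∈ Finset.range n, b ^ (n-1) := Finset.sum_le_sum hterm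
      _ = n * b ^ (n-1) := by simp [Finset.sum_const, mul_comm]
  have key : b ^ n - (b - s) ^ n ≤ n * s * b ^ (n-1) := by
    have : (∑ i ∈ Finset.range n, b ^ i * (b - s) ^ (n - 1 - i)) * (b - (b - s))
        = b ^ n - (b - s) ^ n := hgeom
    rw [show b - (b - s) = s by ring] at this
    rw [← this]
    calc (∑ i ∈ Finset.range n, b ^ i * (b - s) ^ (n - 1 - i)) * s
        ≤ (n * b ^ (n-1)) * s := mul_le_mul_of_nonneg_right hsum hs
      _ = n * s * b ^ (n-1) := by ring
  linarith

/-- For `n ≥ 4`, a cube `Q ⊂ ℝⁿ` of side `ℓ > 0` (Dirichlet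
eigenvalues `π²(a₁²+⋯+aₙ²)/ℓ²` over positive integers `aᵢ`), and every `Λ > 0`:
`N_Q^D(Λ) ≥ (ω(n)ℓⁿ/(2π)ⁿ) Λ^{n/2} - (ω(n) n^{3/2} π ℓ^{n-1}/(2π)ⁿ) Λ^{(n-1)/2}`. -/
theorem cube_counting_lower_highdim (n : ℕ) (hn : 4 ≤ n) (ℓ Λ : ℝ) (hℓ : 0 < ℓ)
    (hΛ : 0 < Λ) :
    ballVol n * ℓ ^ n / (2 * π) ^ n * Λ ^ ((n : ℝ) / 2) -
        ballVol n * (n : ℝ) ^ ((3 : ℝ) / 2) * π * ℓ ^ (n - 1) / (2 * π) ^ n *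
          Λ ^ (((n : ℝ) - 1) / 2) ≤
      (Nat.card {a : Fin n → ℕ // (∀ i, 0 < a i) ∧
          π ^ 2 * (∑ i, ((a i : ℝ)) ^ 2) / ℓ ^ 2 < Λ} : ℝ) := by
  have hπ := pi_pos
  have hπ' : π ≠ 0 := ne_of_gt hπ
  have hn0 : 0 < n := by omega
  have hn1 : 1 ≤ n := by omega
  have hnsplit : n = 1 + (n - 1) := by omega
  have hnsucc : n = (n - 1) + 1 := by omega
  obtain ⟨R, hRdef⟩ : ∃ R : ℝ, R = ℓ * Real.sqrt Λ / π := ⟨ℓ * Real.sqrt Λ / π, rfl⟩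
  have hR : 0 < R := by rw [hRdef]; positivity
  have hcond : ∀ S : ℝ, (π ^ 2 * S / ℓ ^ 2 < Λ ↔ S < R ^ 2) := by
    intro S
    have hR2 : R ^ 2 = ℓ ^ 2 * Λ / π ^ 2 := by
      rw [hRdef, div_pow, mul_pow, Real.sq_sqrt hΛ.le]
    rw [hR2, div_lt_iff₀ (by positivity), lt_div_iff₀ (by positivity)]
    constructor <;> intro h <;> nlinarith
  have hcard : (Nat.card {a : Fin n → ℕ // (∀ i, 0 < a i) ∧
        π ^ 2 * (∑ i, ((a i : ℝ)) ^ 2) / ℓ ^ 2 < Λ})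
      = Nat.card {a : Fin n → ℕ // (∀ i, 0 < a i) ∧ (∑ i, ((a i : ℝ)) ^ 2) < R ^ 2} :=
    Nat.card_congr (Equiv.subtypeEquivRight fun a => by rw [hcond])
  have h32 : ((n:ℝ)) ^ ((3:ℝ)/2) = (n:ℝ) * Real.sqrt n := by
    rw [show (3/2:ℝ) = 1 + 1/2 by norm_num, Real.rpow_add (by positivity), Real.rpow_one,
      Real.sqrt_eq_rpow]
  have hΛn : Λ ^ ((n : ℝ)/2) = (Real.sqrt Λ) ^ n := by
    rw [Real.sqrt_eq_rpow, ← Real.rpow_natCast (Λ ^ (1/2:ℝ)) n, ← Real.rpow_mul hΛ.le]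
    ring_nf
  have hΛn1 : Λ ^ (((n : ℝ) - 1)/2) = (Real.sqrt Λ) ^ (n - 1) := by
    rw [Real.sqrt_eq_rpow, ← Real.rpow_natCast (Λ ^ (1/2:ℝ)) (n-1), ← Real.rpow_mul hΛ.le]
    congr 1
    rw [Nat.cast_sub hn1]
    push_cast
    ring
  have hLHS : ballVol n * ℓ ^ n / (2 * π) ^ n * Λ ^ ((n : ℝ) / 2) -
        ballVol n * (n : ℝ) ^ ((3 : ℝ) / 2) * π * ℓ ^ (n - 1) / (2 * π) ^ n *
          Λ ^ (((n : ℝ) - 1) / 2)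
      = ballVol n / 2 ^ n * (R ^ n - ((n:ℝ) * Real.sqrt n) * R ^ (n-1)) := by
    rw [hΛn, hΛn1, h32, hRdef]
    obtain ⟨m, rfl⟩ : ∃ m, n = m + 1 := ⟨n - 1, hnsucc⟩
    simp only [Nat.add_sub_cancel]
    rw [div_pow, mul_pow, div_pow]
    field_simp
    ring
  rw [hLHS, hcard]
  by_cases hcase : R ≤ Real.sqrt n
  · have hn1 : (1:ℝ) ≤ (n:ℝ) := by exact_mod_cast hn0
    have hsn : Real.sqrt n ≤ (n:ℝ) * Real.sqrt n := by
      nlinarith [Real.sqrt_nonneg (n:ℝ)]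
    have h1 : R ^ n ≤ ((n:ℝ) * Real.sqrt n) * R ^ (n-1) := by
      have hsplit : R ^ n = R * R ^ (n-1) := by
        conv_lhs => rw [hnsplit]
        rw [pow_add, pow_one]
      rw [hsplit]
      calc R * R ^ (n-1) ≤ Real.sqrt n * R ^ (n-1) :=
            mul_le_mul_of_nonneg_right hcase (by positivity)
        _ ≤ ((n:ℝ) * Real.sqrt n) * R ^ (n-1) :=
            mul_le_mul_of_nonneg_right hsn (by positivity)
    have h2 : ballVol n / 2 ^ n * (R ^ n - ((n:ℝ) * Real.sqrt n) * R ^ (n-1)) ≤ 0 :=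
      mul_nonpos_of_nonneg_of_nonpos (div_nonneg (aux_ballVol_pos n).le (by positivity))
        (by linarith)
    exact h2.trans (Nat.cast_nonneg _)
  · push_neg at hcase
    obtain ⟨r, hrdef⟩ : ∃ r : ℝ, r = R - Real.sqrt n := ⟨R - Real.sqrt n, rfl⟩
    have hr : 0 < r := by rw [hrdef]; linarith
    have hTfin : Set.Finite {a : Fin n → ℕ | (∀ i, 0 < a i) ∧ (∑ i, ((a i : ℝ)) ^ 2) < R ^ 2} := by
      apply Set.Finite.subset (Set.Finite.pi (fun _ : Fin n => Set.finite_Iic (Nat.ceil R)))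
      rintro a ⟨hpos, hsum⟩
      simp only [Set.mem_pi, Set.mem_univ, Set.mem_Iic, forall_true_left]
      intro i
      have h1 : ((a i : ℝ)) ^ 2 ≤ ∑ j, ((a j : ℝ)) ^ 2 :=
        Finset.single_le_sum (f := fun j => ((a j : ℝ)) ^ 2) (fun j _ => sq_nonneg _)
          (Finset.mem_univ i)
      have h3 : (a i : ℝ) < R := lt_of_pow_lt_pow_left₀ 2 hR.le (lt_of_le_of_lt h1 hsum)
      have h4 : (a i : ℝ) < (Nat.ceil R : ℝ) := lt_of_lt_of_le h3 (Nat.le_ceil R)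
      exact le_of_lt (by exact_mod_cast h4)
    have hk : Nat.card {a : Fin n → ℕ // (∀ i, 0 < a i) ∧ (∑ i, ((a i : ℝ)) ^ 2) < R ^ 2}
        = hTfin.toFinset.card := by
      have h := Nat.card_coe_set_eq
        {a : Fin n → ℕ | (∀ i, 0 < a i) ∧ (∑ i, ((a i : ℝ)) ^ 2) < R ^ 2}
      rw [Set.ncard_eq_toFinset_card _ hTfin] at h
      exact h
    have hvol1 := aux_vol_ball n hn0 r hr
    have hvol2 := aux_sym n r
    have hvol3 : volume {x : Fin n → ℝ | (∀ i, 0 < x i) ∧ (∑ i, (x i) ^ 2) < r ^ 2}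
        ≤ (hTfin.toFinset.card : ℝ≥0∞) := by
      apply aux_cover n hn0 r R hr (le_of_eq (by rw [hrdef]; ring))
      intro a ha
      exact hTfin.mem_toFinset.mpr ha
    have hineq : ENNReal.ofReal (ballVol n * r ^ n)
        ≤ ENNReal.ofReal (2 ^ n * (hTfin.toFinset.card : ℝ)) := by
      rw [← hvol1]
      refine le_trans hvol2 ?_
      rw [ENNReal.ofReal_mul (by positivity), ENNReal.ofReal_pow (by norm_num),
        ENNReal.ofReal_ofNat, ENNReal.ofReal_natCast]
      exact mul_le_mul_right hvol3 _
    have hreal : ballVol n * r ^ n ≤ 2 ^ n * (hTfin.toFinset.card : ℝ) :=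
      (ENNReal.ofReal_le_ofReal_iff (mul_nonneg (by positivity) (Nat.cast_nonneg _))).mp hineq
    rw [hk]
    have hbern := aux_bernoulli n R (Real.sqrt n) (Real.sqrt_nonneg _) hcase.le
    have h2n : (0:ℝ) < 2 ^ n := by positivity
    have hbv := (aux_ballVol_pos n).le
    calc ballVol n / 2 ^ n * (R ^ n - ((n:ℝ) * Real.sqrt n) * R ^ (n-1))
        ≤ ballVol n / 2 ^ n * r ^ n := by
          apply mul_le_mul_of_nonneg_left _ (div_nonneg (aux_ballVol_pos n).le (by positivity))
          calc R ^ n - ((n:ℝ) * Real.sqrt n) * R ^ (n-1)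
              = R ^ n - (n:ℝ) * Real.sqrt n * R ^ (n-1) := by ring
            _ ≤ (R - Real.sqrt n) ^ n := hbern
            _ = r ^ n := by rw [hrdef]
      _ ≤ (hTfin.toFinset.card : ℝ) := by
          rw [div_mul_eq_mul_div, div_le_iff₀ h2n]
          linarith [hreal]
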